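/- For any 2n functions φ_0,…,φ_{n-1}, ψ_0,…,ψ_{n-1} of one variable and points k_0,…,k_{n-1}, one has det[φ_i(k_ℓ)] · det[ψ_j(k_ℓ)] = Σ_{σ∈S_n} det[φ_i(k_{σ(j)})·ψ_j(k_{σ(j)})], where the sum runs over all permutations σ of {0,…,n−1}. -/
import Mathlib


/-- For any `2n` functions `φ_0,…,φ_{n-1}, ψ_0,…,ψ_{n-1}` and points
`k_0,…,k_{n-1}`:
`det[φ_i(k_ℓ)] · det[ψ_j(k_ℓ)] = Σ_{σ∈S_n} det[φ_i(k_{σ(j)})·ψ_j(k_{σ(j)})]`. -/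
theorem det_mul_det_eq_sum_perm {R K : Type*} [CommRing R] (n : ℕ)
    (φ ψ : Fin n → K → R) (k : Fin n → K) :
    Matrix.det (Matrix.of fun i l => φ i (k l))
        * Matrix.det (Matrix.of fun j l => ψ j (k l))
      = ∑ σ : Equiv.Perm (Fin n),
          Matrix.det (Matrix.of fun i j => φ i (k (σ j)) * ψ j (k (σ j))) := by
  have hψ : Matrix.det (Matrix.of fun j l => ψ j (k l))
      = ∑ σ : Equiv.Perm (Fin n),
          (Equiv.Perm.sign σ : ℤ) * ∏ j, ψ j (k (σ j)) := by
    rw [← Matrix.det_transpose, Matrix.det_apply']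
    rfl
  rw [hψ, Finset.mul_sum]
  refine Finset.sum_congr rfl fun σ _ => ?_
  have h1 : (Matrix.of fun i j => φ i (k (σ j)) * ψ j (k (σ j)))
      = Matrix.of fun i j => (fun j => ψ j (k (σ j))) j *
          ((Matrix.of fun i l => φ i (k l)).submatrix id σ) i j := by
    ext i j
    simp [mul_comm]
  rw [h1, Matrix.det_mul_row, Matrix.det_permute']
  ring
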